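/- There is a constant c_1 > 0 such that, with probability 1−o(1) as n → ∞, every tour through n points drawn independently and uniformly at random from the unit square has total Euclidean length at least c_1·√n. -/

import Mathlib

open MeasureTheory ProbabilityTheory

/-- The unit square `[0,1]² ⊆ ℝ²`. -/
def unitSquare : Set (ℝ × ℝ) := Set.Icc (0:ℝ) 1 ×ˢ Set.Icc (0:ℝ) 1

/-- The length of the closed tour visiting the points `x 0, ..., x (n-1)` in the order
given by the permutation `σ` (returning to its start). -/
noncomputable def tourLength {n : ℕ} (x : Fin n → ℝ × ℝ) (σ : Equiv.Perm (Fin n)) : ℝ :=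
  ∑ i : Fin n, dist (x (σ i)) (x (σ (finRotate n i)))

set_option linter.unusedSectionVars false
set_option linter.unusedVariables false


lemma unitSquare_meas : MeasurableSet unitSquare :=
  (measurableSet_Icc).prod measurableSet_Icc

lemma nu_prob : IsProbabilityMeasure (volume.restrict unitSquare) := by
  constructor
  rw [Measure.restrict_apply_univ, unitSquare, Measure.volume_eq_prod, Measure.prod_prod,
    Real.volume_Icc]
  norm_num

lemma nu_ball {r : ℝ} (hr : 0 ≤ r) (x : ℝ × ℝ) :
    volume.restrict unitSquare (Metric.closedBall x r) ≤ ENNReal.ofReal (4 * r ^ 2) := by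
  refine le_trans (Measure.restrict_apply_le _ _) ?_
  have : Metric.closedBall x r = Metric.closedBall x.1 r ×ˢ Metric.closedBall x.2 r := by
    rw [closedBall_prod_same]
  rw [this, Measure.volume_eq_prod, Measure.prod_prod, Real.volume_closedBall,
    Real.volume_closedBall, ← ENNReal.ofReal_mul (by linarith)]
  refine le_of_eq (congrArg _ (by ring))


lemma finRotate_ne {n : ℕ} (hn : 2 ≤ n) (i : Fin n) : finRotate n i ≠ i := by
  obtain ⟨m, rfl⟩ : ∃ m, n = m + 2 := ⟨n - 2, by omega⟩
  rw [finRotate_succ_apply]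
  intro h
  have h1 : (1 : Fin (m + 2)) = 0 := by
    have h2 : i + 1 = i + 0 := by rw [add_zero]; exact h
    exact add_left_cancel h2
  simp at h1

lemma tour_lb {n : ℕ} (hn : 2 ≤ n) (x : Fin n → ℝ × ℝ) (σ : Equiv.Perm (Fin n))
    {r : ℝ} (hr : 0 ≤ r) (G : Finset (Fin n))
    (hG : ∀ i ∈ G, ∀ j, j ≠ i → r < dist (x i) (x j)) :
    r * G.card ≤ tourLength x σ := by
  classical
  set S : Finset (Fin n) := G.image σ.symm with hS
  have hcard : S.card = G.card := Finset.card_image_of_injective _ σ.symm.injective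
  have hterm : ∀ i ∈ S, r ≤ dist (x (σ i)) (x (σ (finRotate n i))) := by
    intro i hi
    obtain ⟨g, hg, rfl⟩ := Finset.mem_image.mp hi
    rw [Equiv.apply_symm_apply]
    refine le_of_lt (hG g hg _ ?_)
    intro h
    have h2 : finRotate n (σ.symm g) = σ.symm g := by
      have := congrArg σ.symm h
      simpa using this
    exact finRotate_ne hn _ h2
  calc r * G.card = ∑ _i ∈ S, r := by rw [Finset.sum_const, hcard, nsmul_eq_mul, mul_comm]
    _ ≤ ∑ i ∈ S, dist (x (σ i)) (x (σ (finRotate n i))) := Finset.sum_le_sum hterm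
    _ ≤ tourLength x σ := by
        refine Finset.sum_le_sum_of_subset_of_nonneg (Finset.subset_univ S) ?_
        intro i _ _; exact dist_nonneg


section
variable {n : ℕ} {Ω : Type} [MeasurableSpace Ω] {μ : Measure Ω} [IsProbabilityMeasure μ]
  {P : Fin n → Ω → ℝ × ℝ}


lemma distSet_meas {r : ℝ} :
    MeasurableSet {p : (ℝ × ℝ) × (ℝ × ℝ) | dist p.1 p.2 ≤ r} :=
  measurableSet_le measurable_dist measurable_const

lemma pair_law (hm : ∀ i, Measurable (P i))
    (hind : iIndepFun P μ)
    (hmap : ∀ i, Measure.map (P i) μ = volume.restrict unitSquare)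
    {i j : Fin n} (hij : i ≠ j) :
    μ.map (fun ω => (P i ω, P j ω))
      = (volume.restrict unitSquare).prod (volume.restrict unitSquare) := by
  have h := (indepFun_iff_map_prod_eq_prod_map_map (hm i).aemeasurable
    (hm j).aemeasurable).mp (hind.indepFun hij)
  rw [h, hmap i, hmap j]

lemma event_meas (hm : ∀ i, Measurable (P i)) {r : ℝ} (i j : Fin n) :
    MeasurableSet {ω | dist (P i ω) (P j ω) ≤ r} :=
  ((hm i).prodMk (hm j)) distSet_meas

lemma mk_preimage_dist (x : ℝ × ℝ) (r : ℝ) :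
    (Prod.mk x ⁻¹' {p : (ℝ × ℝ) × (ℝ × ℝ) | dist p.1 p.2 ≤ r}) = Metric.closedBall x r := by
  ext y; simp [Metric.mem_closedBall, dist_comm]

lemma pair_measure_le (hm : ∀ i, Measurable (P i))
    (hind : iIndepFun P μ)
    (hmap : ∀ i, Measure.map (P i) μ = volume.restrict unitSquare)
    {r : ℝ} (hr : 0 ≤ r) {i j : Fin n} (hij : i ≠ j) :
    μ {ω | dist (P i ω) (P j ω) ≤ r} ≤ ENNReal.ofReal (4 * r ^ 2) := by
  have : IsProbabilityMeasure (volume.restrict unitSquare) := nu_prob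
  have h1 : {ω | dist (P i ω) (P j ω) ≤ r}
      = (fun ω => (P i ω, P j ω)) ⁻¹' {p : (ℝ × ℝ) × (ℝ × ℝ) | dist p.1 p.2 ≤ r} := rfl
  rw [h1, ← Measure.map_apply ((hm i).prodMk (hm j)) distSet_meas, pair_law hm hind hmap hij,
    Measure.prod_apply distSet_meas]
  calc ∫⁻ x, (volume.restrict unitSquare)
        (Prod.mk x ⁻¹' {p : (ℝ × ℝ) × (ℝ × ℝ) | dist p.1 p.2 ≤ r}) ∂(volume.restrict unitSquare)
      ≤ ∫⁻ _, ENNReal.ofReal (4 * r ^ 2) ∂(volume.restrict unitSquare) := by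
        refine lintegral_mono fun x => ?_
        rw [mk_preimage_dist]
        exact nu_ball hr x
    _ = ENNReal.ofReal (4 * r ^ 2) := by simp


/-- the triple bound -/
lemma triple_measure_le (hm : ∀ i, Measurable (P i))
    (hind : iIndepFun P μ)
    (hmap : ∀ i, Measure.map (P i) μ = volume.restrict unitSquare)
    {r : ℝ} (hr : 0 ≤ r) {a b c : Fin n} (hba : b ≠ a) (hca : c ≠ a) (hbc : b ≠ c) :
    μ ({ω | dist (P a ω) (P b ω) ≤ r} ∩ {ω | dist (P a ω) (P c ω) ≤ r})
      ≤ ENNReal.ofReal (16 * r ^ 4) := by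
  set ν := volume.restrict unitSquare with hν
  have : IsProbabilityMeasure ν := nu_prob
  have hlaw : μ.map (fun ω => (P a ω, (P b ω, P c ω))) = ν.prod (ν.prod ν) := by
    have h1 : IndepFun (P a) (fun ω => (P b ω, P c ω)) μ :=
      (hind.indepFun_prodMk hm b c a hba hca).symm
    have h2 := (indepFun_iff_map_prod_eq_prod_map_map (hm a).aemeasurable
      (((hm b).prodMk (hm c))).aemeasurable).mp h1
    rw [h2, hmap a, pair_law hm hind hmap hbc]
  set T : Set ((ℝ × ℝ) × ((ℝ × ℝ) × (ℝ × ℝ))) :=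
    {q | dist q.1 q.2.1 ≤ r ∧ dist q.1 q.2.2 ≤ r} with hT
  have hTmeas : MeasurableSet T := by
    refine MeasurableSet.inter ?_ ?_
    · exact measurableSet_le (measurable_fst.dist (measurable_fst.comp measurable_snd))
        measurable_const
    · exact measurableSet_le (measurable_fst.dist (measurable_snd.comp measurable_snd))
        measurable_const
  have hpre : {ω | dist (P a ω) (P b ω) ≤ r} ∩ {ω | dist (P a ω) (P c ω) ≤ r}
      = (fun ω => (P a ω, (P b ω, P c ω))) ⁻¹' T := rfl
  rw [hpre, ← Measure.map_apply ((hm a).prodMk ((hm b).prodMk (hm c))) hTmeas, hlaw,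
    Measure.prod_apply hTmeas]
  have hsec : ∀ x : ℝ × ℝ, (Prod.mk x ⁻¹' T)
      = Metric.closedBall x r ×ˢ Metric.closedBall x r := by
    intro x; ext y
    simp [hT, Metric.mem_closedBall, dist_comm]
  calc ∫⁻ x, ν.prod ν (Prod.mk x ⁻¹' T) ∂ν
      ≤ ∫⁻ _, ENNReal.ofReal (16 * r ^ 4) ∂ν := by
        refine lintegral_mono fun x => ?_
        rw [hsec x, Measure.prod_prod]
        calc ν (Metric.closedBall x r) * ν (Metric.closedBall x r)
            ≤ ENNReal.ofReal (4 * r ^ 2) * ENNReal.ofReal (4 * r ^ 2) :=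
              mul_le_mul' (nu_ball hr x) (nu_ball hr x)
          _ = ENNReal.ofReal (16 * r ^ 4) := by
              rw [← ENNReal.ofReal_mul (by positivity)]; ring_nf
    _ = ENNReal.ofReal (16 * r ^ 4) := by simp

lemma disjoint_pair_indep (hm : ∀ i, Measurable (P i))
    (hind : iIndepFun P μ)
    {r : ℝ} {i j k l : Fin n} (hik : i ≠ k) (hil : i ≠ l) (hjk : j ≠ k) (hjl : j ≠ l) :
    μ ({ω | dist (P i ω) (P j ω) ≤ r} ∩ {ω | dist (P k ω) (P l ω) ≤ r})
      = μ {ω | dist (P i ω) (P j ω) ≤ r} * μ {ω | dist (P k ω) (P l ω) ≤ r} := by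
  have h := hind.indepFun_prodMk_prodMk hm i j k l hik hil hjk hjl
  exact h.measure_inter_preimage_eq_mul _ _ distSet_meas distSet_meas


lemma var_bound (hn : 2 ≤ n) (hm : ∀ i, Measurable (P i))
    (hind : iIndepFun P μ)
    (hmap : ∀ i, Measure.map (P i) μ = volume.restrict unitSquare)
    {r : ℝ} (hr : 0 < r) :
    μ[(fun ω => ∑ p ∈ Finset.univ.offDiag,
          ({ω' | dist (P p.1 ω') (P p.2 ω') ≤ r}).indicator (fun _ => (1:ℝ)) ω)]
        ≤ (n:ℝ)^2 * (4 * r^2) ∧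
    variance (fun ω => ∑ p ∈ Finset.univ.offDiag,
          ({ω' | dist (P p.1 ω') (P p.2 ω') ≤ r}).indicator (fun _ => (1:ℝ)) ω) μ
        ≤ (n:ℝ)^2 * (8 * r^2) + (n:ℝ)^2 * ((4*n) * (16 * r^4)) := by
  classical
  set A : Fin n × Fin n → Set Ω := fun p => {ω | dist (P p.1 ω) (P p.2 ω) ≤ r} with hAdef
  have hA : ∀ p, MeasurableSet (A p) := fun p => event_meas hm p.1 p.2
  set OD : Finset (Fin n × Fin n) := Finset.univ.offDiag with hOD
  set X : Ω → ℝ := fun ω => ∑ p ∈ OD, (A p).indicator (fun _ => (1:ℝ)) ω with hX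
  have hne : ∀ p ∈ OD, p.1 ≠ p.2 := fun p hp => (Finset.mem_offDiag.mp hp).2.2
  have hAle : ∀ p ∈ OD, (μ (A p)).toReal ≤ 4 * r^2 := fun p hp =>
    ENNReal.toReal_le_of_le_ofReal (by positivity) (pair_measure_le hm hind hmap hr.le (hne p hp))
  have hcardOD : (OD.card : ℝ) ≤ (n:ℝ)^2 := by
    have h1 : OD.card ≤ n * n := by
      rw [hOD, Finset.offDiag_card]
      simp only [Finset.card_univ, Fintype.card_fin]
      omega
    calc (OD.card : ℝ) ≤ ((n*n : ℕ) : ℝ) := by exact_mod_cast h1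
      _ = (n:ℝ)^2 := by push_cast; ring
  have hX2 : MemLp X 2 μ := by
    have h := memLp_finset_sum' (μ := μ) (s := OD)
      (f := fun p => (A p).indicator (fun _ => (1:ℝ)))
      (fun p _ => memLp_indicator_const 2 (hA p) (1:ℝ) (Or.inr (measure_ne_top μ _)))
    have h2 : (∑ p ∈ OD, (A p).indicator (fun _ => (1:ℝ))) = X := by
      funext ω; rw [hX]; simp [Finset.sum_apply]
    rwa [h2] at h
  have hint : ∀ p : Fin n × Fin n, Integrable ((A p).indicator (fun _ => (1:ℝ))) μ :=
    fun p => (integrable_const (1:ℝ)).indicator (hA p)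
  have hEX : μ[X] = ∑ p ∈ OD, (μ (A p)).toReal := by
    rw [hX, integral_finset_sum _ fun p _ => hint p]
    refine Finset.sum_congr rfl fun p _ => ?_
    rw [integral_indicator_const (1:ℝ) (hA p), smul_eq_mul, mul_one, measureReal_def]
  have hEXle : μ[X] ≤ (n:ℝ)^2 * (4 * r^2) := by
    rw [hEX]
    calc ∑ p ∈ OD, (μ (A p)).toReal ≤ OD.card • (4 * r^2) :=
          Finset.sum_le_card_nsmul _ _ _ hAle
      _ = (OD.card : ℝ) * (4 * r^2) := by rw [nsmul_eq_mul]
      _ ≤ (n:ℝ)^2 * (4 * r^2) := by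
          apply mul_le_mul_of_nonneg_right hcardOD (by positivity)
  refine ⟨hEXle, ?_⟩
  -- second moment
  have hE2 : μ[X^2] = ∑ p ∈ OD, ∑ q ∈ OD, (μ (A p ∩ A q)).toReal := by
    have hsq : X^2 = fun ω => ∑ p ∈ OD, ∑ q ∈ OD,
        (A p ∩ A q).indicator (fun _ => (1:ℝ)) ω := by
      funext ω
      rw [Pi.pow_apply, sq, hX, Finset.sum_mul_sum]
      refine Finset.sum_congr rfl fun p _ => Finset.sum_congr rfl fun q _ => ?_
      rw [← Set.inter_indicator_mul]
      norm_num
    rw [hsq, integral_finset_sum _ fun p _ =>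
      integrable_finset_sum _ fun q _ => (integrable_const (1:ℝ)).indicator ((hA p).inter (hA q))]
    refine Finset.sum_congr rfl fun p _ => ?_
    rw [integral_finset_sum _ fun q _ => (integrable_const (1:ℝ)).indicator ((hA p).inter (hA q))]
    refine Finset.sum_congr rfl fun q _ => ?_
    rw [integral_indicator_const (1:ℝ) ((hA p).inter (hA q)), smul_eq_mul, mul_one, measureReal_def]
  have hvar : variance X μ = ∑ p ∈ OD, ∑ q ∈ OD,
      ((μ (A p ∩ A q)).toReal - (μ (A p)).toReal * (μ (A q)).toReal) := by
    rw [variance_eq_sub hX2, hE2, hEX, sq, Finset.sum_mul_sum, ← Finset.sum_sub_distrib]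
    exact Finset.sum_congr rfl fun p _ => by rw [← Finset.sum_sub_distrib]
  -- termwise bound
  have hterm : ∀ p ∈ OD, ∀ q ∈ OD,
      (μ (A p ∩ A q)).toReal - (μ (A p)).toReal * (μ (A q)).toReal ≤
        (if q = p ∨ q = p.swap then 4*r^2 else 0)
        + (if q.1 = p.1 ∨ q.1 = p.2 ∨ q.2 = p.1 ∨ q.2 = p.2 then 16*r^4 else 0) := by
    intro p hp q hq
    have hp12 := hne p hp
    have hq12 := hne q hq
    have hmulnn : 0 ≤ (μ (A p)).toReal * (μ (A q)).toReal := by positivity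
    have hAsymm : ∀ i j : Fin n, {ω | dist (P i ω) (P j ω) ≤ r}
        = {ω | dist (P j ω) (P i ω) ≤ r} := by
      intro i j; ext ω; simp [dist_comm]
    by_cases hs2 : q = p ∨ q = p.swap
    · have h1 : (μ (A p ∩ A q)).toReal ≤ 4 * r^2 := by
        refine le_trans ?_ (hAle p hp)
        exact ENNReal.toReal_mono (measure_ne_top μ _) (measure_mono Set.inter_subset_left)
      have h2 : (0:ℝ) ≤ if q.1 = p.1 ∨ q.1 = p.2 ∨ q.2 = p.1 ∨ q.2 = p.2
          then 16*r^4 else 0 := by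
        split_ifs <;> positivity
      rw [if_pos hs2]
      linarith
    · by_cases ht : q.1 = p.1 ∨ q.1 = p.2 ∨ q.2 = p.1 ∨ q.2 = p.2
      · have hkey : μ (A p ∩ A q) ≤ ENNReal.ofReal (16 * r^4) := by
          have hAp : A p = {ω | dist (P p.1 ω) (P p.2 ω) ≤ r} := rfl
          have hAq : A q = {ω | dist (P q.1 ω) (P q.2 ω) ≤ r} := rfl
          have hnp : q ≠ p := fun h => hs2 (Or.inl h)
          have hnsw : q ≠ p.swap := fun h => hs2 (Or.inr h)
          rcases ht with h | h | h | h
          · -- q.1 = p.1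
            rw [hAp, hAq, h]
            refine triple_measure_le hm hind hmap hr.le (Ne.symm hp12) ?_ ?_
            · rw [← h]; exact Ne.symm hq12
            · intro he; exact hnp (Prod.ext h (he.symm))
          · -- q.1 = p.2
            rw [hAp, hAq, h, hAsymm p.1 p.2]
            refine triple_measure_le hm hind hmap hr.le hp12 ?_ ?_
            · rw [← h]; exact Ne.symm hq12
            · intro he; exact hnsw (Prod.ext h (he.symm))
          · -- q.2 = p.1
            rw [hAp, hAq, h, hAsymm q.1 p.1]
            refine triple_measure_le hm hind hmap hr.le (Ne.symm hp12) ?_ ?_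
            · rw [← h]; exact hq12
            · intro he; exact hnsw (Prod.ext (he.symm) h)
          · -- q.2 = p.2
            rw [hAp, hAq, h, hAsymm p.1 p.2, hAsymm q.1 p.2]
            refine triple_measure_le hm hind hmap hr.le hp12 ?_ ?_
            · rw [← h]; exact hq12
            · intro he; exact hnp (Prod.ext (he.symm) h)
        have h1 : (μ (A p ∩ A q)).toReal ≤ 16 * r^4 :=
          ENNReal.toReal_le_of_le_ofReal (by positivity) hkey
        rw [if_neg hs2, if_pos ht]
        linarith
      · push_neg at ht
        obtain ⟨h1, h2, h3, h4⟩ := ht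
        have heq : μ (A p ∩ A q) = μ (A p) * μ (A q) :=
          disjoint_pair_indep hm hind (Ne.symm h1) (Ne.symm h3) (Ne.symm h2) (Ne.symm h4)
        rw [heq, ENNReal.toReal_mul, if_neg hs2,
          if_neg (by push_neg; exact ⟨h1, h2, h3, h4⟩)]
        simp
  -- sum the bound
  rw [hvar]
  have hinner : ∀ p ∈ OD, (∑ q ∈ OD,
      ((μ (A p ∩ A q)).toReal - (μ (A p)).toReal * (μ (A q)).toReal))
      ≤ 8 * r^2 + (4*(n:ℝ)) * (16 * r^4) := by
    intro p hp
    have hB1 : (∑ q ∈ OD, if q = p ∨ q = p.swap then 4*r^2 else (0:ℝ)) ≤ 8 * r^2 := by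
      rw [← Finset.sum_filter, Finset.sum_const, nsmul_eq_mul]
      have hsub : OD.filter (fun q => q = p ∨ q = p.swap) ⊆ {p, p.swap} := by
        intro q hq
        rcases (Finset.mem_filter.mp hq).2 with h | h <;> simp [h]
      have hcard : ((OD.filter (fun q => q = p ∨ q = p.swap)).card : ℝ) ≤ 2 := by
        have h2 : ({p, p.swap} : Finset (Fin n × Fin n)).card ≤ 2 := by
          apply le_trans (Finset.card_insert_le _ _); simp
        have := le_trans (Finset.card_le_card hsub) h2
        exact_mod_cast this
      calc ((OD.filter (fun q => q = p ∨ q = p.swap)).card : ℝ) * (4*r^2)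
          ≤ 2 * (4*r^2) := by
            apply mul_le_mul_of_nonneg_right hcard (by positivity)
        _ = 8 * r^2 := by ring
    have hB2 : (∑ q ∈ OD, if q.1 = p.1 ∨ q.1 = p.2 ∨ q.2 = p.1 ∨ q.2 = p.2
        then 16*r^4 else (0:ℝ)) ≤ (4*(n:ℝ)) * (16 * r^4) := by
      rw [← Finset.sum_filter, Finset.sum_const, nsmul_eq_mul]
      set Tch : Finset (Fin n × Fin n) :=
        (({p.1, p.2} : Finset (Fin n)) ×ˢ Finset.univ) ∪
          (Finset.univ ×ˢ ({p.1, p.2} : Finset (Fin n))) with hTch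
      have hsub : OD.filter
          (fun q => q.1 = p.1 ∨ q.1 = p.2 ∨ q.2 = p.1 ∨ q.2 = p.2) ⊆ Tch := by
        intro q hq
        rcases (Finset.mem_filter.mp hq).2 with h | h | h | h <;>
          simp [hTch, Finset.mem_union, Finset.mem_product, h]
      have hTchcard : (Tch.card : ℝ) ≤ 4*(n:ℝ) := by
        have h1 : Tch.card ≤ 2 * n + n * 2 := by
          refine le_trans (Finset.card_union_le _ _) ?_
          have hc2 : ({p.1, p.2} : Finset (Fin n)).card ≤ 2 := by
            apply le_trans (Finset.card_insert_le _ _); simp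
          have := Finset.card_product ({p.1, p.2} : Finset (Fin n)) (Finset.univ : Finset (Fin n))
          have := Finset.card_product (Finset.univ : Finset (Fin n)) ({p.1, p.2} : Finset (Fin n))
          simp only [Finset.card_product, Finset.card_univ, Fintype.card_fin]
          exact Nat.add_le_add (Nat.mul_le_mul_right n hc2) (Nat.mul_le_mul_left n hc2)
        calc (Tch.card : ℝ) ≤ ((2 * n + n * 2 : ℕ) : ℝ) := by exact_mod_cast h1
          _ = 4*(n:ℝ) := by push_cast; ring
      calc ((OD.filter _).card : ℝ) * (16*r^4)
          ≤ (Tch.card : ℝ) * (16*r^4) := by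
            apply mul_le_mul_of_nonneg_right _ (by positivity)
            exact_mod_cast Finset.card_le_card hsub
        _ ≤ (4*(n:ℝ)) * (16*r^4) := by
            apply mul_le_mul_of_nonneg_right hTchcard (by positivity)
    calc (∑ q ∈ OD, ((μ (A p ∩ A q)).toReal - (μ (A p)).toReal * (μ (A q)).toReal))
        ≤ ∑ q ∈ OD, ((if q = p ∨ q = p.swap then 4*r^2 else 0)
            + (if q.1 = p.1 ∨ q.1 = p.2 ∨ q.2 = p.1 ∨ q.2 = p.2 then 16*r^4 else 0)) :=
          Finset.sum_le_sum (fun q hq => hterm p hp q hq)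
      _ = (∑ q ∈ OD, if q = p ∨ q = p.swap then 4*r^2 else (0:ℝ))
            + ∑ q ∈ OD, (if q.1 = p.1 ∨ q.1 = p.2 ∨ q.2 = p.1 ∨ q.2 = p.2
              then 16*r^4 else (0:ℝ)) := Finset.sum_add_distrib
      _ ≤ 8 * r^2 + (4*(n:ℝ)) * (16 * r^4) := add_le_add hB1 hB2
  calc (∑ p ∈ OD, ∑ q ∈ OD, ((μ (A p ∩ A q)).toReal - (μ (A p)).toReal * (μ (A q)).toReal))
      ≤ OD.card • (8 * r^2 + (4*(n:ℝ)) * (16 * r^4)) :=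
        Finset.sum_le_card_nsmul _ _ _ hinner
    _ = (OD.card : ℝ) * (8 * r^2 + (4*(n:ℝ)) * (16 * r^4)) := by rw [nsmul_eq_mul]
    _ ≤ (n:ℝ)^2 * (8 * r^2 + (4*(n:ℝ)) * (16 * r^4)) := by
        apply mul_le_mul_of_nonneg_right hcardOD (by positivity)
    _ = (n:ℝ)^2 * (8 * r^2) + (n:ℝ)^2 * ((4*(n:ℝ)) * (16 * r^4)) := by ring


lemma main_prob (hn : 2 ≤ n) (hm : ∀ i, Measurable (P i))
    (hind : iIndepFun P μ)
    (hmap : ∀ i, Measure.map (P i) μ = volume.restrict unitSquare) :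
    (1:ℝ) - 9 / (4 * n) ≤ (μ {ω | ∀ σ : Equiv.Perm (Fin n),
        (1/16 : ℝ) * Real.sqrt n ≤ tourLength (fun i => P i ω) σ}).toReal := by
  classical
  have hn0 : (0:ℝ) < n := by
    have : 0 < n := by omega
    exact_mod_cast this
  have hsq : 0 < Real.sqrt n := Real.sqrt_pos.mpr hn0
  have hid : Real.sqrt n * Real.sqrt n = (n:ℝ) := Real.mul_self_sqrt hn0.le
  set r : ℝ := 1 / (8 * Real.sqrt n) with hrdef
  have hr : 0 < r := by rw [hrdef]; positivity
  have hr2 : r^2 = 1 / (64 * n) := by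
    rw [hrdef, div_pow, one_pow, mul_pow, Real.sq_sqrt hn0.le]
    norm_num
  obtain ⟨hEXle, hVarle⟩ := var_bound hn hm hind hmap hr
  set X : Ω → ℝ := fun ω => ∑ p ∈ Finset.univ.offDiag,
      ({ω' | dist (P p.1 ω') (P p.2 ω') ≤ r}).indicator (fun _ => (1:ℝ)) ω with hXdef
  set A : Fin n × Fin n → Set Ω := fun p => {ω | dist (P p.1 ω) (P p.2 ω) ≤ r} with hAdef
  have hA : ∀ p, MeasurableSet (A p) := fun p => event_meas hm p.1 p.2
  have hXmeas : Measurable X := by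
    rw [hXdef]
    exact Finset.measurable_sum _ fun p _ => (measurable_const.indicator (hA p))
  have hX2 : MemLp X 2 μ := by
    have h := memLp_finset_sum' (μ := μ) (s := Finset.univ.offDiag)
      (f := fun p => (A p).indicator (fun _ => (1:ℝ)))
      (fun p _ => memLp_indicator_const 2 (hA p) (1:ℝ) (Or.inr (measure_ne_top μ _)))
    have h2 : (∑ p ∈ Finset.univ.offDiag, (A p).indicator (fun _ => (1:ℝ))) = X := by
      funext ω; rw [hXdef]; simp [Finset.sum_apply]; rfl
    rwa [h2] at h
  have hEXle' : μ[X] ≤ (n:ℝ)/16 := by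
    refine le_trans hEXle (le_of_eq ?_)
    rw [hr2]; field_simp; ring
  have hVarle' : variance X μ ≤ 9/64 * (n:ℝ) := by
    refine le_trans hVarle (le_of_eq ?_)
    have hr4 : r^4 = (1 / (64 * (n:ℝ)))^2 := by rw [← hr2]; ring
    rw [hr2, hr4]; field_simp; ring
  have hcheb := meas_ge_le_variance_div_sq (μ := μ) hX2
    (c := (n:ℝ)/4) (by positivity)
  have hchebR : μ {ω | (n:ℝ)/4 ≤ |X ω - μ[X]|} ≤ ENNReal.ofReal (9/(4*n)) := by
    refine le_trans hcheb (ENNReal.ofReal_le_ofReal ?_)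
    have h4 : ((n:ℝ)/4)^2 = (n:ℝ)^2/16 := by ring
    rw [h4, div_le_iff₀ (by positivity)]
    have he : 9/(4*(n:ℝ)) * ((n:ℝ)^2/16) = 9/64 * n := by field_simp; ring
    rw [he]; exact hVarle'
  set B : Set Ω := {ω | (n:ℝ)/2 ≤ X ω} with hBdef
  have hBmeas : MeasurableSet B := measurableSet_le measurable_const hXmeas
  have hsubB : B ⊆ {ω | (n:ℝ)/4 ≤ |X ω - μ[X]|} := by
    intro ω h
    have h1 : (n:ℝ)/2 ≤ X ω := h
    have h2 : (n:ℝ)/4 ≤ X ω - μ[X] := by linarith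
    exact le_trans h2 (le_abs_self _)
  have hμB : μ B ≤ ENNReal.ofReal (9/(4*n)) := le_trans (measure_mono hsubB) hchebR
  have hGoodIncl : Bᶜ ⊆ {ω | ∀ σ : Equiv.Perm (Fin n),
      (1/16 : ℝ) * Real.sqrt n ≤ tourLength (fun i => P i ω) σ} := by
    intro ω hω
    have hXω : X ω < (n:ℝ)/2 := lt_of_not_ge hω
    intro σ
    set G : Finset (Fin n) :=
      Finset.univ.filter (fun i => ∀ j, j ≠ i → r < dist (P i ω) (P j ω)) with hGdef
    set Bd : Finset (Fin n) :=
      Finset.univ.filter (fun i => ¬ (∀ j, j ≠ i → r < dist (P i ω) (P j ω))) with hBddef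
    have hGB : G.card + Bd.card = n := by
      rw [hGdef, hBddef, Finset.card_filter_add_card_filter_not]
      simp
    have hex : ∀ i ∈ Bd, ∃ j, j ≠ i ∧ dist (P i ω) (P j ω) ≤ r := by
      intro i hi
      have h := (Finset.mem_filter.mp hi).2
      push_neg at h
      exact h
    have hBdle : (Bd.card : ℝ) ≤ X ω := by
      set f : Fin n → Fin n × Fin n := fun i =>
        if h : ∃ j, j ≠ i ∧ dist (P i ω) (P j ω) ≤ r then (i, h.choose) else (i, i) with hfdef
      have hf1 : ∀ i, (f i).1 = i := by
        intro i; simp only [hfdef]; split_ifs <;> rfl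
      have hfOD : ∀ i ∈ Bd, f i ∈ Finset.univ.offDiag := by
        intro i hi
        have h := hex i hi
        rw [hfdef]; simp only [dif_pos h]
        exact Finset.mem_offDiag.mpr ⟨Finset.mem_univ _, Finset.mem_univ _,
          (h.choose_spec.1).symm⟩
      have hfind : ∀ i ∈ Bd, (A (f i)).indicator (fun _ => (1:ℝ)) ω = 1 := by
        intro i hi
        have h := hex i hi
        rw [hfdef]; simp only [dif_pos h]
        refine Set.indicator_of_mem ?_ _
        have hd : dist (P i ω) (P h.choose ω) ≤ r := h.choose_spec.2
        exact hd
      calc (Bd.card : ℝ) = ∑ _i ∈ Bd, (1:ℝ) := by simp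
        _ = ∑ i ∈ Bd, (A (f i)).indicator (fun _ => (1:ℝ)) ω :=
            Finset.sum_congr rfl fun i hi => (hfind i hi).symm
        _ = ∑ q ∈ Bd.image f, (A q).indicator (fun _ => (1:ℝ)) ω := by
            have hinj : ∀ a ∈ Bd, ∀ b ∈ Bd, f a = f b → a = b := by
              intro a _ b _ h
              rw [← hf1 a, ← hf1 b, h]
            rw [Finset.sum_image hinj]
        _ ≤ X ω := by
            rw [hXdef]
            refine Finset.sum_le_sum_of_subset_of_nonneg ?_ ?_
            · intro q hq
              obtain ⟨i, hi, rfl⟩ := Finset.mem_image.mp hq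
              exact hfOD i hi
            · intro q _ _
              exact Set.indicator_nonneg (fun _ _ => zero_le_one) ω
    have hGge : (n:ℝ)/2 < (G.card : ℝ) := by
      have hc : (G.card : ℝ) + (Bd.card : ℝ) = (n : ℝ) := by exact_mod_cast hGB
      linarith
    have hG : ∀ i ∈ G, ∀ j, j ≠ i → r < dist (P i ω) (P j ω) := by
      intro i hi
      exact (Finset.mem_filter.mp hi).2
    have hlb := tour_lb hn (fun i => P i ω) σ hr.le G hG
    refine le_trans ?_ hlb
    have heq : r * ((n:ℝ)/2) = Real.sqrt n / 16 := by
      rw [hrdef, div_mul_eq_mul_div, one_mul,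
        div_eq_div_iff (by positivity) (by norm_num : (16:ℝ) ≠ 0)]
      linear_combination (-8 : ℝ) * hid
    calc (1/16 : ℝ) * Real.sqrt n = r * ((n:ℝ)/2) := by rw [heq]; ring
      _ ≤ r * (G.card : ℝ) := by
          apply mul_le_mul_of_nonneg_left hGge.le hr.le
  calc (1:ℝ) - 9 / (4 * n) ≤ 1 - (μ B).toReal := by
        have h := ENNReal.toReal_le_of_le_ofReal (by positivity) hμB
        linarith
    _ = (μ Bᶜ).toReal := by
        rw [measure_compl hBmeas (measure_ne_top μ _), measure_univ,
          ENNReal.toReal_sub_of_le prob_le_one ENNReal.one_ne_top, ENNReal.toReal_one]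
    _ ≤ (μ {ω | ∀ σ : Equiv.Perm (Fin n),
          (1/16 : ℝ) * Real.sqrt n ≤ tourLength (fun i => P i ω) σ}).toReal := by
        exact (ENNReal.toReal_le_toReal (measure_ne_top μ _) (measure_ne_top μ _)).mpr
          (measure_mono hGoodIncl)


end

/-- There is a constant `c₁ > 0` such that, with probability `1 - o(1)` as `n → ∞`,
every tour through `n` points drawn independently and uniformly at random from the unit
square has total Euclidean length at least `c₁·√n`. -/
theorem tsp_tour_length_lower_bound :
    ∃ c₁ : ℝ, 0 < c₁ ∧ ∀ δ : ℝ, 0 < δ → ∃ N : ℕ, ∀ n : ℕ, N ≤ n →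
      ∀ (Ω : Type) (_ : MeasurableSpace Ω) (μ : Measure Ω), IsProbabilityMeasure μ →
      ∀ P : Fin n → Ω → ℝ × ℝ, (∀ i, Measurable (P i)) →
      iIndepFun P μ →
      (∀ i, Measure.map (P i) μ = volume.restrict unitSquare) →
      1 - δ ≤ (μ {ω | ∀ σ : Equiv.Perm (Fin n),
          c₁ * Real.sqrt n ≤ tourLength (fun i => P i ω) σ}).toReal := by
  refine ⟨1/16, by norm_num, ?_⟩
  intro δ hδ
  refine ⟨⌈(9:ℝ)/(4*δ)⌉₊ + 2, ?_⟩
  intro n hN Ω _ μ hμ P hm hind hmap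
  have := hμ
  have hn : 2 ≤ n := by omega
  have hn0 : (0:ℝ) < n := by
    have : 0 < n := by omega
    exact_mod_cast this
  have hNn : (9:ℝ)/(4*δ) ≤ n := by
    refine le_trans (Nat.le_ceil _) ?_
    have : (⌈(9:ℝ)/(4*δ)⌉₊ : ℝ) ≤ (n:ℝ) := by
      exact_mod_cast le_trans (Nat.le_add_right _ 2) hN
    exact this
  have h9 : (9:ℝ)/(4*n) ≤ δ := by
    rw [div_le_iff₀ (by positivity)]
    have h2 := (div_le_iff₀ (by positivity : (0:ℝ) < 4*δ)).mp hNn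
    nlinarith
  refine le_trans (by linarith) (main_prob hn hm hind hmap)
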